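/- The Chein loop M(G,2) is a group if and only if G is abelian. -/
import Mathlib



/-- The Chein loop `M(G,2) = G ⊎ Gu`, realized on `G ⊕ G` where `Sum.inl g = g`
and `Sum.inr g = g·u`, with multiplication extending that of `G` and satisfying
(c1) `g₁(g₂u) = (g₂g₁)u`, (c2) `(g₁u)g₂ = (g₁g₂⁻¹)u`, (c3) `(g₁u)(g₂u) = g₂⁻¹g₁`. -/
instance cheinMul (G : Type*) [Group G] : Mul (G ⊕ G) :=
  ⟨fun x y =>
    match x, y with
    | .inl a, .inl b => .inl (a * b)
    | .inl a, .inr b => .inr (b * a)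
    | .inr a, .inl b => .inr (a * b⁻¹)
    | .inr a, .inr b => .inl (b⁻¹ * a)⟩


section
variable {G : Type*} [Group G]
@[simp] lemma chein_ll (a b : G) : (Sum.inl a : G ⊕ G) * Sum.inl b = Sum.inl (a * b) := rfl
@[simp] lemma chein_lr (a b : G) : (Sum.inl a : G ⊕ G) * Sum.inr b = Sum.inr (b * a) := rfl
@[simp] lemma chein_rl (a b : G) : (Sum.inr a : G ⊕ G) * Sum.inl b = Sum.inr (a * b⁻¹) := rfl
@[simp] lemma chein_rr (a b : G) : (Sum.inr a : G ⊕ G) * Sum.inr b = Sum.inl (b⁻¹ * a) := rfl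
end

/-- The Chein loop `M(G,2)` is a group (i.e. its multiplication is associative)
if and only if `G` is abelian. -/
theorem chein_group_iff_abelian (G : Type*) [Group G] :
    (∀ x y z : G ⊕ G, (x * y) * z = x * (y * z)) ↔ (∀ a b : G, a * b = b * a) := by
  constructor
  · intro h a b
    have := h (.inl a) (.inl b) (.inr 1)
    simpa using this
  · intro hc x y z
    have hl : ∀ a b c : G, a * (b * c) = b * (a * c) := fun a b c => by
      rw [← mul_assoc, hc a, mul_assoc]
    cases x <;> cases y <;> cases z <;>
      simp [mul_assoc, mul_inv_rev, hc, hl]
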